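/- Let ψ be a free N-partite state. Then for every index i the i-th reduced density matrix ρ⁽ⁱ⁾(ψ) is diagonal, i.e. ρ⁽ⁱ⁾(ψ)_{k l} = 0 whenever k ≠ l, and its diagonal entries are ρ⁽ⁱ⁾(ψ)_{k k} = ∑_{j ∈ supp(ψ), j i = k} |ψ j|². -/

import Mathlib

open scoped BigOperators Classical

/-- The `i`-th reduced density matrix of an `N`-partite state `ψ`. -/
noncomputable def rdm {N : ℕ} {d : Fin N → ℕ} (ψ : (∀ i, Fin (d i)) → ℂ) (i : Fin N) :
    Matrix (Fin (d i)) (Fin (d i)) ℂ :=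
  fun k l => ∑ j : ∀ i', Fin (d i'),
    if j i = k then ψ j * (starRingEnd ℂ) (ψ (Function.update j i l)) else 0

/-- A state is free if any two distinct elements of its support differ in at least
two coordinates. -/
def IsFree {N : ℕ} {d : Fin N → ℕ} (ψ : (∀ i, Fin (d i)) → ℂ) : Prop :=
  ∀ j k : ∀ i, Fin (d i), ψ j ≠ 0 → ψ k ≠ 0 → j ≠ k →
    ∃ i₁ i₂ : Fin N, i₁ ≠ i₂ ∧ j i₁ ≠ k i₁ ∧ j i₂ ≠ k i₂

/-- For a free state all reduced density matrices are diagonal, with diagonal entries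
given by the sums of `|ψ j|²` over the support elements with the corresponding
`i`-th coordinate. -/
theorem rdm_of_free_diagonal {N : ℕ} {d : Fin N → ℕ} (hd : ∀ i, 1 ≤ d i)
    (ψ : (∀ i, Fin (d i)) → ℂ) (hfree : IsFree ψ) (i : Fin N) :
    (∀ k l : Fin (d i), k ≠ l → rdm ψ i k l = 0) ∧
    (∀ k : Fin (d i),
      rdm ψ i k k =
        ((∑ j : ∀ i', Fin (d i'),
            if ψ j ≠ 0 ∧ j i = k then ‖ψ j‖ ^ 2 else 0 : ℝ) : ℂ)) := by
  constructor
  · intro k l hkl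
    rw [rdm]
    apply Finset.sum_eq_zero
    intro j _
    split_ifs with hji
    · set j' := Function.update j i l with hj'
      have hne : j ≠ j' := by
        intro h
        have : j i = j' i := by rw [← h]
        rw [hj', Function.update_self, hji] at this
        exact hkl this
      by_cases h1 : ψ j = 0
      · simp [h1]
      by_cases h2 : ψ j' = 0
      · simp [h2]
      obtain ⟨i₁, i₂, h12, hi₁, hi₂⟩ := hfree j j' h1 h2 hne
      exfalso
      have key : ∀ m : Fin N, j m ≠ j' m → m = i := by
        intro m hm
        by_contra hmi
        exact hm (by rw [hj', Function.update_of_ne hmi])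
      exact h12 ((key i₁ hi₁).trans (key i₂ hi₂).symm)
    · rfl
  · intro k
    rw [rdm, Complex.ofReal_sum]
    apply Finset.sum_congr rfl
    intro j _
    by_cases hji : j i = k
    · rw [if_pos hji]
      have : Function.update j i k = j := by rw [← hji, Function.update_eq_self]
      rw [this, Complex.mul_conj]
      by_cases h1 : ψ j = 0
      · simp [h1]
      · rw [if_pos ⟨h1, hji⟩, Complex.sq_norm]
    · rw [if_neg hji, if_neg (by tauto)]
      simp
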